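/- For positive integers k₁, k₂, the element z_{k₁,k₂}(a,b) := Σ_{j=1}^{k₁+k₂} ((−1)^j/j) Σ_{π ∈ Π_{j,k₁,k₂}} z_π(a,b) of the free algebra ℚ⟨a,b⟩ is a sum of commutators, where Π_{j,k₁,k₂} is the set of partitions π = (π₁,π₂,π₃) of {1,...,j} with |π₁|+|π₃| = k₁ and |π₂|+|π₃| = k₂, and z_π(a,b) is the ordered product over k = 1,...,j of a (if k ∈ π₁), b (if k ∈ π₂), or ab (if k ∈ π₃). -/

import Mathlib

noncomputable section ZAux

abbrev ZA := FreeAlgebra ℚ Bool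

def ZC : Submodule ℚ ZA := Submodule.span ℚ {y : ZA | ∃ p q, y = p * q - q * p}

def zP (l : List Bool) : ZA := (l.map (FreeAlgebra.ι ℚ)).prod

def zm (l : List Bool) : ZA ⧸ ZC := ZC.mkQ (zP l)

theorem zm_comm (u v : ZA) : ZC.mkQ (u * v) = ZC.mkQ (v * u) := by
  have h : u * v - v * u ∈ ZC := Submodule.subset_span ⟨u, v, rfl⟩
  have := (Submodule.Quotient.eq ZC).2 h
  simpa [Submodule.mkQ_apply] using this

theorem zm_rotate_one (l : List Bool) : zm (l.rotate 1) = zm l := by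
  cases l with
  | nil => simp
  | cons x t =>
      have h1 : (x :: t).rotate 1 = t ++ [x] := by
        simpa using List.rotate_cons_succ t x 0
      rw [h1]
      unfold zm zP
      simp only [List.map_append, List.map_cons, List.map_nil, List.prod_append,
        List.prod_cons, List.prod_nil, mul_one]
      exact zm_comm _ _
theorem zm_rotate (l : List Bool) (n : ℕ) : zm (l.rotate n) = zm l := by
  induction n with
  | zero => simp
  | succ n ih =>
      have : l.rotate (n+1) = (l.rotate n).rotate 1 := by
        rw [List.rotate_rotate]
      rw [this, zm_rotate_one, ih]

theorem ofFn_rot {N : ℕ} (v : Fin N → Bool) (r : Fin N) :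
    (List.ofFn fun i => v (i + r)) = (List.ofFn v).rotate r.val := by
  apply List.ext_get
  · simp
  · intro i h1 h2
    rw [List.get_ofFn, List.get_rotate, List.get_ofFn]
    congr 1
    simp [Fin.add_def]

theorem zm_rot {N : ℕ} (v : Fin N → Bool) (r : Fin N) :
    zm (List.ofFn fun i => v (i + r)) = zm (List.ofFn v) := by
  rw [ofFn_rot, zm_rotate]

end ZAux

section ZEnc

/-- block of marked letters for each part type -/
def zblk : Fin 3 → List (Bool × Bool) := fun x =>
  if x = 0 then [(true, false)]
  else if x = 1 then [(false, false)]
  else [(true, true), (false, false)]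

def zenc (L : List (Fin 3)) : List (Bool × Bool) := (L.map zblk).flatten

@[simp] theorem zenc_nil : zenc [] = [] := rfl
theorem zenc_cons (x : Fin 3) (L : List (Fin 3)) :
    zenc (x :: L) = zblk x ++ zenc L := by simp [zenc]

def zdec : List (Bool × Bool) → List (Fin 3)
  | [] => []
  | (x, false) :: rest => (if x then 0 else 1) :: zdec rest
  | (_, true) :: [] => []
  | (_, true) :: _ :: rest => 2 :: zdec rest

inductive ZValid : List (Bool × Bool) → Prop
  | nil : ZValid []
  | plain (x : Bool) {l : List (Bool × Bool)} : ZValid l → ZValid ((x, false) :: l)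
  | glued {l : List (Bool × Bool)} : ZValid l →
      ZValid ((true, true) :: (false, false) :: l)

theorem zdec_zenc (L : List (Fin 3)) : zdec (zenc L) = L := by
  induction L with
  | nil => rfl
  | cons x L ih =>
      rw [zenc_cons]
      fin_cases x <;> simp [zblk, zdec, ih]

theorem zvalid_zenc (L : List (Fin 3)) : ZValid (zenc L) := by
  induction L with
  | nil => exact ZValid.nil
  | cons x L ih =>
      rw [zenc_cons]
      fin_cases x
      · exact ZValid.plain _ ih
      · exact ZValid.plain _ ih
      · exact ZValid.glued ih

theorem zenc_zdec {l : List (Bool × Bool)} (h : ZValid l) : zenc (zdec l) = l := by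
  induction h with
  | nil => rfl
  | plain x h ih =>
      cases x <;> simp [zdec, zenc_cons, zblk, ih]
  | glued h ih => simp [zdec, zenc_cons, zblk, ih]

theorem zdec_length {l : List (Bool × Bool)} (h : ZValid l) :
    (zdec l).length + l.countP Prod.snd = l.length := by
  induction h with
  | nil => rfl
  | plain x h ih => simp [zdec, List.countP_cons, ih]; omega
  | glued h ih => simp [zdec, List.countP_cons] at *; omega

theorem zenc_length (L : List (Fin 3)) :
    (zenc L).length = L.countP (· ≠ 1) + L.countP (· ≠ 0) := by
  induction L with
  | nil => rfl
  | cons x L ih =>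
      rw [zenc_cons]
      fin_cases x <;> simp [zblk, List.countP_cons, ih] <;> omega

theorem zenc_count_true (L : List (Fin 3)) :
    ((zenc L).map Prod.fst).count true = L.countP (· ≠ 1) := by
  induction L with
  | nil => rfl
  | cons x L ih =>
      rw [zenc_cons]
      fin_cases x <;> simp [zblk, List.countP_cons, List.count_cons, ih]

theorem zenc_count_false (L : List (Fin 3)) :
    ((zenc L).map Prod.fst).count false = L.countP (· ≠ 0) := by
  induction L with
  | nil => rfl
  | cons x L ih =>
      rw [zenc_cons]
      fin_cases x <;> simp [zblk, List.countP_cons, List.count_cons, ih]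

theorem zenc_flags (L : List (Fin 3)) :
    (zenc L).countP Prod.snd = L.count 2 := by
  induction L with
  | nil => rfl
  | cons x L ih =>
      rw [zenc_cons]
      fin_cases x <;> simp [zblk, List.countP_cons, List.count_cons, ih]

def ZSpec (l : List (Bool × Bool)) : Prop :=
  ∀ i (hi : i < l.length), (l.get ⟨i, hi⟩).2 = true →
    (l.get ⟨i, hi⟩).1 = true ∧
      ∃ hi' : i + 1 < l.length, l.get ⟨i + 1, hi'⟩ = (false, false)

theorem zvalid_spec {l : List (Bool × Bool)} (h : ZValid l) : ZSpec l := by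
  induction h with
  | nil => intro i hi; simp at hi
  | plain x h ih =>
      intro i hi hf
      match i with
      | 0 => simp at hf
      | (i+1) =>
          simp only [List.length_cons, Nat.add_lt_add_iff_right] at hi
          obtain ⟨h1, h2, h3⟩ := ih i hi (by simpa using hf)
          exact ⟨by simpa using h1, by simpa using Nat.add_lt_add_right h2 1,
            by simpa using h3⟩
  | glued h ih =>
      intro i hi hf
      match i with
      | 0 => exact ⟨rfl, by simp, by simp⟩
      | 1 => simp at hf
      | (i+2) =>
          simp only [List.length_cons] at hi
          obtain ⟨h1, h2, h3⟩ := ih i (by omega) (by simpa using hf)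
          refine ⟨by simpa using h1, by simp; omega, by simpa using h3⟩

theorem zvalid_of_spec (l : List (Bool × Bool)) (h : ZSpec l) : ZValid l := by
  have H : ∀ n (l : List (Bool × Bool)), l.length ≤ n → ZSpec l → ZValid l := by
    intro n
    induction n with
    | zero => intro l hl _; match l with | [] => exact ZValid.nil
    | succ n ih =>
        intro l hl hs
        match l with
        | [] => exact ZValid.nil
        | (x, false) :: rest =>
            refine ZValid.plain x (ih rest (by simpa using Nat.le_of_succ_le_succ (by simpa using hl)) ?_)
            intro i hi hf
            obtain ⟨h1, h2, h3⟩ := hs (i+1) (by simpa using hi) (by simpa using hf)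
            exact ⟨by simpa using h1, by simpa using h2, by simpa using h3⟩
        | (x, true) :: rest =>
            obtain ⟨h1, h2, h3⟩ := hs 0 (by simp) rfl
            subst h1
            match rest, h2, h3 with
            | (false, false) :: rest', _, _ =>
                refine ZValid.glued (ih rest' ?_ ?_)
                · simp only [List.length_cons] at hl; omega
                · intro i hi hf
                  obtain ⟨g1, g2, g3⟩ := hs (i+2) (by simp; omega) (by simpa using hf)
                  exact ⟨by simpa using g1, by simp only [List.length_cons] at g2 ⊢; omega,
                    by simpa using g3⟩
  exact H l.length l le_rfl h
end ZEnc

section ZFun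

theorem zcountP_ofFn {α : Type*} : ∀ {N : ℕ} (f : Fin N → α) (p : α → Bool),
    (List.ofFn f).countP p = (Finset.univ.filter fun i => p (f i) = true).card := by
  intro N
  induction N with
  | zero => intro f p; simp
  | succ n ih =>
      intro f p
      rw [List.ofFn_succ, List.countP_cons, Finset.card_filter, Fin.sum_univ_succ,
        ← Finset.card_filter, ih]
      by_cases h : p (f 0) = true <;> simp [h] <;> omega

variable {N : ℕ} [NeZero N]

theorem zneg_one_val : ((-1 : Fin N) : ℕ) = N - 1 := by
  rcases N with _ | n
  · exact (NeZero.ne 0 rfl).elim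
  · simpa using Fin.coe_neg_one (n := n)

theorem zval_add_one (i : Fin N) (h : i.val + 1 < N) : ((i + 1 : Fin N)).val = i.val + 1 := by
  have h2 : N ≠ 0 := NeZero.ne N
  have h1 : (1 : Fin N).val = 1 % N := Fin.val_one' N
  have h3 : 1 % N = 1 := Nat.mod_eq_of_lt (by omega)
  rw [Fin.val_add, h1, h3, Nat.mod_eq_of_lt (by omega)]

def zMof (l : List (Bool × Bool)) (i : Fin N) : Bool × Bool := l.getD i (true, false)

theorem zmof_get {l : List (Bool × Bool)} (hl : l.length = N) (i : Fin N) :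
    (zMof l : Fin N → Bool × Bool) i = l.get ⟨i.val, hl ▸ i.isLt⟩ := by
  have h : (i : ℕ) < l.length := hl ▸ i.isLt
  rw [zMof, List.getD_eq_getElem l _ h]
  rfl

def zValidF (M : Fin N → Bool × Bool) : Prop :=
  ∀ i, (M i).2 = true → (M i).1 = true ∧ (M (i + 1)).1 = false

theorem zofFn_mof {l : List (Bool × Bool)} (hl : l.length = N) :
    List.ofFn (zMof l : Fin N → Bool × Bool) = l := by
  apply List.ext_get
  · simp [hl]
  · intro i h1 h2
    rw [List.get_ofFn, zmof_get hl]
    congr 1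

theorem zvalid_ofFn (M : Fin N → Bool × Bool) (h : zValidF M) (hc : (M (-1)).2 = false) :
    ZValid (List.ofFn M) := by
  apply zvalid_of_spec
  intro i hi hf
  have hiN : i < N := by simpa using hi
  set i' : Fin N := ⟨i, hiN⟩ with hi'def
  have hcast : (Fin.cast (List.length_ofFn (f := M)) ⟨i, hi⟩ : Fin N) = i' := by
    apply Fin.ext; simp [hi'def]
  rw [List.get_ofFn, hcast] at hf
  have hlt : i + 1 < N := by
    by_contra hge
    have hieq : i' = -1 := by
      apply Fin.ext
      rw [zneg_one_val]
      simp [hi'def]; omega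
    rw [hieq, hc] at hf
    exact Bool.false_ne_true hf
  obtain ⟨ha1, ha2⟩ := h i' hf
  have hnext : i' + 1 = (⟨i + 1, hlt⟩ : Fin N) := by
    apply Fin.ext
    rw [zval_add_one i' (by simpa [hi'def] using hlt)]
  have hflagnext : (M (i' + 1)).2 = false := by
    by_contra hff
    have := (h (i' + 1) (by simpa using hff)).1
    rw [this] at ha2
    simp at ha2
  have hlt' : i + 1 < (List.ofFn M).length := by simpa using hlt
  refine ⟨?_, hlt', ?_⟩
  · rw [List.get_ofFn, hcast]; exact ha1
  · have hcast2 : (Fin.cast (List.length_ofFn (f := M)) ⟨i + 1, hlt'⟩ : Fin N) = i' + 1 := by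
      rw [hnext]; apply Fin.ext; simp
    rw [List.get_ofFn, hcast2]
    apply Prod.ext
    · exact ha2
    · exact hflagnext

theorem zvalidF_mof {l : List (Bool × Bool)} (hl : l.length = N) (h : ZValid l) :
    zValidF (zMof l : Fin N → Bool × Bool) ∧ ((zMof l : Fin N → Bool × Bool) (-1)).2 = false := by
  have hspec := zvalid_spec h
  constructor
  · intro i hf
    rw [zmof_get hl] at hf
    obtain ⟨h1, h2, h3⟩ := hspec i.val _ hf
    have hlt : i.val + 1 < N := hl ▸ h2
    have hnext : (i + 1 : Fin N).val = i.val + 1 := zval_add_one i hlt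
    constructor
    · rw [zmof_get hl]; exact h1
    · rw [zmof_get hl]
      have heq : (⟨((i + (1 : Fin N))).val, hl ▸ (i + (1 : Fin N)).isLt⟩ : Fin l.length)
          = ⟨i.val + 1, h2⟩ := by
        apply Fin.ext; simpa using hnext
      rw [heq, h3]
  · by_contra hf
    rw [zmof_get hl] at hf
    obtain ⟨h1, h2, h3⟩ := hspec _ _ (by simpa using hf)
    rw [zneg_one_val] at h2
    omega

end ZFun

noncomputable section ZMore
open Finset

def zF (x : Fin 3) : ZA :=
  if x = 0 then FreeAlgebra.ι ℚ true
  else if x = 1 then FreeAlgebra.ι ℚ false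
  else FreeAlgebra.ι ℚ true * FreeAlgebra.ι ℚ false

theorem zP_append (l1 l2 : List Bool) : zP (l1 ++ l2) = zP l1 * zP l2 := by
  simp [zP]

theorem zprod_enc (L : List (Fin 3)) :
    zP ((zenc L).map Prod.fst) = (L.map zF).prod := by
  induction L with
  | nil => simp [zP]
  | cons x L ih =>
      rw [zenc_cons, List.map_append, zP_append, List.map_cons, List.prod_cons, ih]
      congr 1
      fin_cases x <;> simp [zblk, zF, zP]

theorem zenc_countP_fst (L : List (Fin 3)) :
    (zenc L).countP Prod.fst = L.countP (· ≠ 1) := by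
  induction L with
  | nil => rfl
  | cons x L ih =>
      rw [zenc_cons]
      fin_cases x <;> simp [zblk, List.countP_cons, ih]

theorem zenc_countP_fst_false (L : List (Fin 3)) :
    (zenc L).countP (fun p => p.1 = false) = L.countP (· ≠ 0) := by
  induction L with
  | nil => rfl
  | cons x L ih =>
      rw [zenc_cons]
      fin_cases x <;> simp [zblk, List.countP_cons] at ih ⊢ <;> omega

theorem zcount_ne {j : ℕ} (π : Fin j → Fin 3) (y : Fin 3) :
    (List.ofFn π).countP (fun x => x ≠ y) = (univ.filter fun k => π k ≠ y).card := by
  rw [zcountP_ofFn]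
  congr 1
  apply Finset.filter_congr
  intro k _
  simp

variable {N : ℕ} [NeZero N]

theorem zmof_ofFn (M : Fin N → Bool × Bool) : (zMof (List.ofFn M) : Fin N → Bool × Bool) = M := by
  funext i
  rw [zmof_get (List.length_ofFn (f := M)) i, List.get_ofFn]
  congr 1

open Fin.CommRing in
theorem zQf_exists (v : Fin N → Bool) (h1 : ∃ i, v i = true) (h2 : ∃ i, v i = false) :
    ∃ i, v i = true ∧ v (i + 1) = false := by
  by_contra hcon
  push_neg at hcon
  obtain ⟨i0, hi0⟩ := h1
  obtain ⟨i1, hi1⟩ := h2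
  have key : ∀ n : ℕ, v (i0 + (n : Fin N)) = true := by
    intro n
    induction n with
    | zero => simpa using hi0
    | succ n ih =>
        have hcast : ((n + 1 : ℕ) : Fin N) = (n : Fin N) + 1 := by push_cast; ring
        rw [hcast, ← add_assoc]
        have := hcon (i0 + (n : Fin N)) ih
        revert this
        cases v (i0 + (n : Fin N) + 1) <;> simp
  have := key ((i1 - i0 : Fin N)).val
  rw [Fin.cast_val_eq_self] at this
  have heq : i0 + (i1 - i0) = i1 := by ring
  rw [heq, hi1] at this
  exact Bool.false_ne_true this

theorem zcard_shift (q : Fin N → Prop) [DecidablePred q] (r : Fin N) :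
    (univ.filter fun i => q (i + r)).card = (univ.filter fun i => q i).card := by
  apply Finset.card_bij' (fun i _ => i + r) (fun i _ => i - r)
  · intro i hi
    simp only [mem_filter, mem_univ, true_and] at hi ⊢
    exact hi
  · intro i hi
    simp only [mem_filter, mem_univ, true_and] at hi ⊢
    simpa [sub_add_cancel] using hi
  · intro i _; simp [add_sub_cancel_right]
  · intro i _; simp [sub_add_cancel]

theorem zsign_helper (d : ℕ) : ((-1 : ℚ)) ^ (d + 1) + (-1) ^ d = 0 := by
  rw [pow_succ]; ring

theorem zsign_split {c : ℕ} (h : c ≤ N) : ((-1 : ℚ)) ^ (N - c) = (-1) ^ N * (-1) ^ c := by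
  have h1 : ((-1 : ℚ)) ^ (N - c) * (-1) ^ c = (-1) ^ N := by
    rw [← pow_add, Nat.sub_add_cancel h]
  have h2 : ((-1 : ℚ)) ^ c * (-1) ^ c = 1 := by
    rw [← mul_pow]; norm_num
  calc ((-1 : ℚ)) ^ (N - c) = (-1) ^ (N - c) * ((-1) ^ c * (-1) ^ c) := by rw [h2, mul_one]
    _ = ((-1) ^ (N - c) * (-1) ^ c) * (-1) ^ c := by ring
    _ = (-1) ^ N * (-1) ^ c := by rw [h1]

end ZMore

noncomputable section ZInv
open Finset

variable {N : ℕ} [NeZero N]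

def zQf (M : Fin N → Bool × Bool) : Finset (Fin N) :=
  univ.filter fun i => (M i).1 = true ∧ (M (i + 1)).1 = false

def zflagc (M : Fin N → Bool × Bool) : ℕ :=
  (univ.filter fun i => (M i).2 = true).card

def zsig (M : Fin N → Bool × Bool) (i0 : Fin N) : Fin N → Bool × Bool :=
  fun i => if i = i0 then ((M i).1, !(M i).2) else M i

theorem zsig_fst (M : Fin N → Bool × Bool) (i0 i : Fin N) :
    (zsig M i0 i).1 = (M i).1 := by
  unfold zsig; split <;> rfl

theorem zsig_snd_ne (M : Fin N → Bool × Bool) (i0 i : Fin N) (h : i ≠ i0) :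
    (zsig M i0 i).2 = (M i).2 := by
  unfold zsig; rw [if_neg h]

theorem zsig_snd_eq (M : Fin N → Bool × Bool) (i0 : Fin N) :
    (zsig M i0 i0).2 = !(M i0).2 := by
  unfold zsig; rw [if_pos rfl]

theorem zQf_sig (M : Fin N → Bool × Bool) (i0 : Fin N) : zQf (zsig M i0) = zQf M := by
  unfold zQf
  apply Finset.filter_congr
  intro i _
  simp [zsig_fst]

theorem zsig_invol (M : Fin N → Bool × Bool) (i0 : Fin N) : zsig (zsig M i0) i0 = M := by
  funext i
  unfold zsig
  by_cases h : i = i0 <;> simp [h]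

theorem zsig_validF (M : Fin N → Bool × Bool) (i0 : Fin N) (h : zValidF M)
    (hQ : i0 ∈ zQf M) : zValidF (zsig M i0) := by
  intro i hf
  rw [zsig_fst, zsig_fst]
  by_cases hi : i = i0
  · subst hi
    exact (Finset.mem_filter.mp hQ).2
  · rw [zsig_snd_ne M i0 i hi] at hf
    exact h i hf

theorem zsig_flag_filter_pos (M : Fin N → Bool × Bool) (i0 : Fin N) (h : (M i0).2 = true) :
    (univ.filter fun i => (zsig M i0 i).2 = true)
      = (univ.filter fun i => (M i).2 = true).erase i0 := by
  ext i
  simp only [Finset.mem_filter, Finset.mem_erase, Finset.mem_univ, true_and]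
  by_cases hi : i = i0
  · subst hi
    simp [zsig_snd_eq, h]
  · simp [zsig_snd_ne M i0 i hi, hi]

theorem zsig_flag_filter_neg (M : Fin N → Bool × Bool) (i0 : Fin N) (h : (M i0).2 = false) :
    (univ.filter fun i => (zsig M i0 i).2 = true)
      = insert i0 (univ.filter fun i => (M i).2 = true) := by
  ext i
  simp only [Finset.mem_filter, Finset.mem_insert, Finset.mem_univ, true_and]
  by_cases hi : i = i0
  · subst hi
    simp [zsig_snd_eq, h]
  · simp [zsig_snd_ne M i0 i hi, hi]

theorem zsig_flagc (M : Fin N → Bool × Bool) (i0 : Fin N) :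
    (if (M i0).2 = true then zflagc (zsig M i0) + 1 = zflagc M
      else zflagc (zsig M i0) = zflagc M + 1) := by
  unfold zflagc
  by_cases h : (M i0).2 = true
  · rw [if_pos h, zsig_flag_filter_pos M i0 h,
      Finset.card_erase_of_mem (by simp [h])]
    have : 0 < (univ.filter fun i => (M i).2 = true).card :=
      Finset.card_pos.mpr ⟨i0, by simp [h]⟩
    omega
  · rw [if_neg h, zsig_flag_filter_neg M i0 (by simpa using h),
      Finset.card_insert_of_notMem (by simp [h])]

end ZInv

noncomputable section ZMain
open Finset

def zSIG (k₁ k₂ N : ℕ) : Finset (Σ j : ℕ, Fin j → Fin 3) :=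
  (Finset.Icc 1 N).sigma fun j => Finset.univ.filter fun π =>
    (Finset.univ.filter fun k => π k ≠ 1).card = k₁ ∧
    (Finset.univ.filter fun k => π k ≠ 0).card = k₂

def zCnt (k₁ k₂ : ℕ) {N : ℕ} (M : Fin N → Bool × Bool) : Prop :=
  (Finset.univ.filter fun i => (M i).1 = true).card = k₁ ∧
  (Finset.univ.filter fun i => (M i).1 = false).card = k₂

instance (k₁ k₂ N : ℕ) (M : Fin N → Bool × Bool) : Decidable (zCnt k₁ k₂ M) := by
  unfold zCnt; infer_instance

instance {N : ℕ} [NeZero N] (M : Fin N → Bool × Bool) : Decidable (zValidF M) := by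
  unfold zValidF; infer_instance

def zS0F (k₁ k₂ N : ℕ) [NeZero N] : Finset (Fin N → Bool × Bool) :=
  Finset.univ.filter fun M => zValidF M ∧ (M (-1)).2 = false ∧ zCnt k₁ k₂ M

def zfmap (N : ℕ) [NeZero N] (x : Σ j : ℕ, Fin j → Fin 3) : Fin N → Bool × Bool :=
  zMof (zenc (List.ofFn x.2))

def zgmap {N : ℕ} (M : Fin N → Bool × Bool) : Σ j : ℕ, Fin j → Fin 3 :=
  ⟨(zdec (List.ofFn M)).length, fun k => (zdec (List.ofFn M)).get k⟩

theorem zcard_fst_true {N : ℕ} (M : Fin N → Bool × Bool) :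
    (Finset.univ.filter fun i => (M i).1 = true).card = (List.ofFn M).countP Prod.fst := by
  rw [zcountP_ofFn]

theorem zcard_fst_false {N : ℕ} (M : Fin N → Bool × Bool) :
    (Finset.univ.filter fun i => (M i).1 = false).card
      = (List.ofFn M).countP (fun p => p.1 = false) := by
  rw [zcountP_ofFn]
  congr 1
  apply Finset.filter_congr
  intro k _
  simp

theorem zcard_snd_true {N : ℕ} [NeZero N] (M : Fin N → Bool × Bool) :
    zflagc M = (List.ofFn M).countP Prod.snd := by
  rw [zflagc, zcountP_ofFn]

theorem zenc_ofFn_length {j : ℕ} (π : Fin j → Fin 3) (k₁ k₂ : ℕ)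
    (h1 : (Finset.univ.filter fun k => π k ≠ 1).card = k₁)
    (h2 : (Finset.univ.filter fun k => π k ≠ 0).card = k₂) :
    (zenc (List.ofFn π)).length = k₁ + k₂ := by
  rw [zenc_length, zcount_ne, zcount_ne, h1, h2]

theorem zsigma_ofFn {j : ℕ} (π : Fin j → Fin 3) :
    (⟨(List.ofFn π).length, fun k => (List.ofFn π).get k⟩ : Σ j : ℕ, Fin j → Fin 3)
      = ⟨j, π⟩ := by
  refine Sigma.ext (List.length_ofFn (f := π)) ?_
  rw [Fin.heq_fun_iff (by simp)]
  intro i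
  simp [List.get_ofFn]

theorem ZT1 (k₁ k₂ : ℕ) (hk₁ : 1 ≤ k₁) (hk₂ : 1 ≤ k₂) (N : ℕ) (hN : N = k₁ + k₂)
    [NeZero N] :
    ∑ x ∈ zSIG k₁ k₂ N,
        ((-1 : ℚ) ^ x.1 / (x.1 : ℚ)) • ZC.mkQ ((List.ofFn fun k => zF (x.2 k)).prod)
      = ∑ M ∈ zS0F k₁ k₂ N,
          ((-1 : ℚ) ^ (N - zflagc M) / ((N - zflagc M : ℕ) : ℚ)) •
            zm (List.ofFn fun i => (M i).1) := by
  apply Finset.sum_nbij' (i := zfmap N) (j := zgmap)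
  · -- maps into zS0F
    rintro ⟨j, π⟩ hx
    rw [zSIG, Finset.mem_sigma, Finset.mem_filter] at hx
    obtain ⟨-, -, h1, h2⟩ := hx
    have hlen : (zenc (List.ofFn π)).length = N := by
      rw [zenc_ofFn_length π k₁ k₂ h1 h2, hN]
    have hv := zvalid_zenc (List.ofFn π)
    have hvf := zvalidF_mof (N := N) hlen hv
    have hofn : List.ofFn (zfmap N ⟨j, π⟩) = zenc (List.ofFn π) := zofFn_mof hlen
    rw [zS0F, Finset.mem_filter]
    refine ⟨Finset.mem_univ _, hvf.1, hvf.2, ?_, ?_⟩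
    · rw [zcard_fst_true, hofn, zenc_countP_fst, zcount_ne, h1]
    · rw [zcard_fst_false, hofn, zenc_countP_fst_false, zcount_ne, h2]
  · -- maps into zSIG
    intro M hM
    rw [zS0F, Finset.mem_filter] at hM
    obtain ⟨-, hvf, hcut, hc1, hc2⟩ := hM
    have hv : ZValid (List.ofFn M) := zvalid_ofFn M hvf hcut
    have henc : zenc (zdec (List.ofFn M)) = List.ofFn M := zenc_zdec hv
    have hlenN : (List.ofFn M).length = N := List.length_ofFn (f := M)
    have hflags : (zdec (List.ofFn M)).length + (List.ofFn M).countP Prod.snd = N := by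
      rw [zdec_length hv, hlenN]
    have hcnt1 : (Finset.univ.filter fun k => (zdec (List.ofFn M)).get k ≠ 1).card = k₁ := by
      rw [← zcount_ne, List.ofFn_get, ← zenc_countP_fst, henc, ← zcard_fst_true, hc1]
    have hcnt2 : (Finset.univ.filter fun k => (zdec (List.ofFn M)).get k ≠ 0).card = k₂ := by
      rw [← zcount_ne, List.ofFn_get, ← zenc_countP_fst_false, henc, ← zcard_fst_false, hc2]
    have hflag_lt : (List.ofFn M).countP Prod.snd < N := by
      obtain ⟨i, hi⟩ : ∃ i, (M i).1 = false := by
        have : 0 < (Finset.univ.filter fun i => (M i).1 = false).card := by omega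
        obtain ⟨i, hi⟩ := Finset.card_pos.mp this
        exact ⟨i, (Finset.mem_filter.mp hi).2⟩
      have hflagi : ¬ (M i).2 = true := by
        intro hf
        rw [(hvf i hf).1] at hi
        exact Bool.false_ne_true hi.symm
      have hne : (Finset.univ.filter fun i => (M i).2 = true) ≠ Finset.univ := by
        intro heq
        have hmem : i ∈ Finset.univ.filter (fun i => (M i).2 = true) := by
          rw [heq]; exact Finset.mem_univ i
        exact hflagi (Finset.mem_filter.mp hmem).2
      have hlt : (Finset.univ.filter fun i => (M i).2 = true).card < N := by
        have := Finset.card_lt_card (Finset.ssubset_univ_iff.mpr hne)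
        simpa using this
      rw [← zcard_snd_true M] at *
      exact hlt
    have hgm : (zgmap M).fst = (zdec (List.ofFn M)).length := rfl
    rw [zSIG, Finset.mem_sigma, Finset.mem_filter]
    exact ⟨Finset.mem_Icc.mpr ⟨by omega, by omega⟩, Finset.mem_univ _, hcnt1, hcnt2⟩
  · -- left inverse
    rintro ⟨j, π⟩ hx
    rw [zSIG, Finset.mem_sigma, Finset.mem_filter] at hx
    obtain ⟨-, -, h1, h2⟩ := hx
    have hlen : (zenc (List.ofFn π)).length = N := by
      rw [zenc_ofFn_length π k₁ k₂ h1 h2, hN]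
    have hofn : List.ofFn (zfmap N ⟨j, π⟩) = zenc (List.ofFn π) := zofFn_mof hlen
    show zgmap (zfmap N ⟨j, π⟩) = ⟨j, π⟩
    unfold zgmap
    rw [hofn, zdec_zenc]
    exact zsigma_ofFn π
  · -- right inverse
    intro M hM
    rw [zS0F, Finset.mem_filter] at hM
    obtain ⟨-, hvf, hcut, hc1, hc2⟩ := hM
    have hv : ZValid (List.ofFn M) := zvalid_ofFn M hvf hcut
    have henc : zenc (zdec (List.ofFn M)) = List.ofFn M := zenc_zdec hv
    show zfmap N (zgmap M) = M
    unfold zfmap zgmap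
    simp only [List.ofFn_get]
    rw [henc, zmof_ofFn]
  · -- values match
    rintro ⟨j, π⟩ hx
    rw [zSIG, Finset.mem_sigma, Finset.mem_filter] at hx
    obtain ⟨-, -, h1, h2⟩ := hx
    have hlen : (zenc (List.ofFn π)).length = N := by
      rw [zenc_ofFn_length π k₁ k₂ h1 h2, hN]
    have hofn : List.ofFn (zfmap N ⟨j, π⟩) = zenc (List.ofFn π) := zofFn_mof hlen
    have hflagc : zflagc (zfmap N ⟨j, π⟩) = (List.ofFn π).count 2 := by
      rw [zcard_snd_true, hofn, zenc_flags]
    have hjlen : j + (List.ofFn π).count 2 = N := by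
      have := zdec_length (zvalid_zenc (List.ofFn π))
      rw [zdec_zenc, List.length_ofFn, hlen, zenc_flags] at this
      exact this
    have hsub : N - zflagc (zfmap N ⟨j, π⟩) = j := by omega
    have hfst : (List.ofFn fun i => ((zfmap N ⟨j, π⟩) i).1)
        = (List.ofFn (zfmap N ⟨j, π⟩)).map Prod.fst := by
      rw [List.map_ofFn]; rfl
    have hprod : (List.ofFn fun k => zF (π k)) = (List.ofFn π).map zF := by
      rw [List.map_ofFn]; rfl
    rw [hsub, hprod]
    congr 1
    rw [zm, hfst, hofn, zprod_enc]

def zPairF (k₁ k₂ N : ℕ) [NeZero N] : Finset ((Fin N → Bool × Bool) × Fin N) :=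
  Finset.univ.filter fun p => zValidF p.1 ∧ (p.1 (p.2 - 1)).2 = false ∧ zCnt k₁ k₂ p.1

def zterm (N : ℕ) [NeZero N] (M : Fin N → Bool × Bool) : ZA ⧸ ZC :=
  ((-1 : ℚ) ^ (N - zflagc M) / ((N - zflagc M : ℕ) : ℚ)) • zm (List.ofFn fun i => (M i).1)

open Fin.CommRing in
theorem zvalidF_shift {N : ℕ} [NeZero N] (M : Fin N → Bool × Bool) (r : Fin N)
    (h : zValidF M) : zValidF (fun i => M (i + r)) := by
  intro i hf
  refine ⟨(h (i + r) hf).1, ?_⟩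
  show (M (i + 1 + r)).1 = false
  have : i + 1 + r = i + r + 1 := by ring
  rw [this]
  exact (h (i + r) hf).2

theorem zflagc_shift {N : ℕ} [NeZero N] (M : Fin N → Bool × Bool) (r : Fin N) :
    zflagc (fun i => M (i + r)) = zflagc M :=
  zcard_shift (fun s => (M s).2 = true) r

theorem zCnt_shift {N : ℕ} [NeZero N] (k₁ k₂ : ℕ) (M : Fin N → Bool × Bool) (r : Fin N)
    (h : zCnt k₁ k₂ M) : zCnt k₁ k₂ (fun i => M (i + r)) := by
  obtain ⟨h1, h2⟩ := h
  exact ⟨(zcard_shift (fun s => (M s).1 = true) r).trans h1,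
    (zcard_shift (fun s => (M s).1 = false) r).trans h2⟩

theorem zterm_shift {N : ℕ} [NeZero N] (M : Fin N → Bool × Bool) (r : Fin N) :
    zterm N (fun i => M (i + r)) = zterm N M := by
  unfold zterm
  rw [zflagc_shift]
  congr 1
  exact zm_rot (fun i => (M i).1) r

open Fin.CommRing in
theorem ZT2 (k₁ k₂ : ℕ) (N : ℕ) [NeZero N] :
    ∑ p ∈ zPairF k₁ k₂ N, zterm N p.1 = N • ∑ M ∈ zS0F k₁ k₂ N, zterm N M := by
  rw [Finset.sum_finset_product_right (zPairF k₁ k₂ N) Finset.univ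
    (fun r => Finset.univ.filter fun M => zValidF M ∧ (M (r - 1)).2 = false ∧ zCnt k₁ k₂ M)
    (by intro p; simp [zPairF])]
  have hinner : ∀ r : Fin N,
      ∑ M ∈ Finset.univ.filter
        (fun M => zValidF M ∧ (M (r - 1)).2 = false ∧ zCnt k₁ k₂ M), zterm N M
      = ∑ M ∈ zS0F k₁ k₂ N, zterm N M := by
    intro r
    apply Finset.sum_nbij' (i := fun M => fun i => M (i + r)) (j := fun M => fun i => M (i - r))
    · intro M hM
      rw [Finset.mem_filter] at hM
      obtain ⟨-, hvf, hcut, hcnt⟩ := hM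
      rw [zS0F, Finset.mem_filter]
      refine ⟨Finset.mem_univ _, zvalidF_shift M r hvf, ?_, zCnt_shift k₁ k₂ M r hcnt⟩
      show (M (-1 + r)).2 = false
      have : (-1 : Fin N) + r = r - 1 := by ring
      rw [this]
      exact hcut
    · intro M hM
      rw [zS0F, Finset.mem_filter] at hM
      obtain ⟨-, hvf, hcut, hcnt⟩ := hM
      rw [Finset.mem_filter]
      have hsh : ∀ i : Fin N, i + (-r) = i - r := by intro i; ring
      refine ⟨Finset.mem_univ _, ?_, ?_, ?_⟩
      · have := zvalidF_shift M (-r) hvf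
        simpa only [hsh] using this
      · show (M (r - 1 - r)).2 = false
        have : r - 1 - r = -1 := by ring
        rw [this]
        exact hcut
      · have := zCnt_shift k₁ k₂ M (-r) hcnt
        simpa only [hsh] using this
    · intro M _
      funext i
      simp
    · intro M _
      funext i
      simp
    · intro M _
      exact (zterm_shift M r).symm
  rw [Finset.sum_congr rfl (fun r _ => hinner r)]
  rw [Finset.sum_const, Finset.card_univ, Fintype.card_fin]

theorem zQf_nonempty {N : ℕ} [NeZero N] {k₁ k₂ : ℕ} (hk₁ : 1 ≤ k₁) (hk₂ : 1 ≤ k₂)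
    (M : Fin N → Bool × Bool) (h : zCnt k₁ k₂ M) : (zQf M).Nonempty := by
  obtain ⟨h1, h2⟩ := h
  have ht : ∃ i, (M i).1 = true := by
    obtain ⟨i, hi⟩ := Finset.card_pos.mp (by omega : 0 < (Finset.univ.filter fun i => (M i).1 = true).card)
    exact ⟨i, (Finset.mem_filter.mp hi).2⟩
  have hf : ∃ i, (M i).1 = false := by
    obtain ⟨i, hi⟩ := Finset.card_pos.mp (by omega : 0 < (Finset.univ.filter fun i => (M i).1 = false).card)
    exact ⟨i, (Finset.mem_filter.mp hi).2⟩
  obtain ⟨i, hT, hF⟩ := zQf_exists (fun i => (M i).1) ht hf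
  exact ⟨i, Finset.mem_filter.mpr ⟨Finset.mem_univ _, hT, hF⟩⟩

theorem zinv_sum (k₁ k₂ : ℕ) (hk₁ : 1 ≤ k₁) (hk₂ : 1 ≤ k₂) (N : ℕ) [NeZero N] :
    ∑ M ∈ (Finset.univ.filter fun M : Fin N → Bool × Bool => zValidF M ∧ zCnt k₁ k₂ M),
      ((-1 : ℚ) ^ (zflagc M)) • zm (List.ofFn fun i => (M i).1) = 0 := by
  apply Finset.sum_involution
    (g := fun M hM => zsig M ((zQf M).min'
      (zQf_nonempty hk₁ hk₂ M (Finset.mem_filter.mp hM).2.2)))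
  · intro M hM
    set i0 := (zQf M).min' (zQf_nonempty hk₁ hk₂ M (Finset.mem_filter.mp hM).2.2) with hi0
    have hv : (List.ofFn fun i => (zsig M i0 i).1) = (List.ofFn fun i => (M i).1) :=
      congrArg List.ofFn (funext (zsig_fst M i0))
    rw [hv, ← add_smul]
    have hfl := zsig_flagc M i0
    convert zero_smul ℚ (zm (List.ofFn fun i => (M i).1)) using 2
    by_cases hcase : (M i0).2 = true
    · rw [if_pos hcase] at hfl
      rw [← hfl]
      exact zsign_helper _
    · rw [if_neg hcase] at hfl
      rw [hfl, add_comm]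
      exact zsign_helper _
  · intro M hM hne
    intro h'
    have h2 := congrArg Prod.snd (congrFun h' ((zQf M).min'
      (zQf_nonempty hk₁ hk₂ M (Finset.mem_filter.mp hM).2.2)))
    rw [zsig_snd_eq] at h2
    simp at h2
  · intro M hM
    have key : ∀ (i0 : Fin N) (h' : (zQf (zsig M i0)).Nonempty) (h0 : (zQf M).Nonempty),
        i0 = (zQf M).min' h0 →
        zsig (zsig M i0) ((zQf (zsig M i0)).min' h') = M := by
      intro i0 h' h0 hEq
      have h1 : (zQf (zsig M i0)).min' h' = (zQf M).min' h0 := by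
        congr 1
        exact zQf_sig M i0
      rw [h1, ← hEq, zsig_invol]
    exact key _ _ _ rfl
  · intro M hM
    obtain ⟨-, hvf, hcnt⟩ := Finset.mem_filter.mp hM
    have hQmem := (zQf M).min'_mem (zQf_nonempty hk₁ hk₂ M (Finset.mem_filter.mp hM).2.2)
    rw [Finset.mem_filter]
    refine ⟨Finset.mem_univ _, zsig_validF M _ hvf hQmem, ?_, ?_⟩
    · rw [show (Finset.univ.filter fun i => ((zsig M ((zQf M).min'
          (zQf_nonempty hk₁ hk₂ M (Finset.mem_filter.mp hM).2.2)) i).1 = true))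
        = (Finset.univ.filter fun i => (M i).1 = true) from
        Finset.filter_congr fun x _ => by rw [zsig_fst]]
      exact hcnt.1
    · rw [show (Finset.univ.filter fun i => ((zsig M ((zQf M).min'
          (zQf_nonempty hk₁ hk₂ M (Finset.mem_filter.mp hM).2.2)) i).1 = false))
        = (Finset.univ.filter fun i => (M i).1 = false) from
        Finset.filter_congr fun x _ => by rw [zsig_fst]]
      exact hcnt.2

theorem zflagc_lt {N : ℕ} [NeZero N] {k₁ k₂ : ℕ} (hk₂ : 1 ≤ k₂) (M : Fin N → Bool × Bool)
    (hvf : zValidF M) (hcnt : zCnt k₁ k₂ M) : zflagc M < N := by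
  obtain ⟨i, hi⟩ : ∃ i, (M i).1 = false := by
    obtain ⟨h1, h2⟩ := hcnt
    obtain ⟨i, hi⟩ := Finset.card_pos.mp
      (by omega : 0 < (Finset.univ.filter fun i => (M i).1 = false).card)
    exact ⟨i, (Finset.mem_filter.mp hi).2⟩
  have hflagi : ¬ (M i).2 = true := by
    intro hf
    rw [(hvf i hf).1] at hi
    exact Bool.false_ne_true hi.symm
  have hne : (Finset.univ.filter fun i => (M i).2 = true) ≠ Finset.univ := by
    intro heq
    have hmem : i ∈ Finset.univ.filter (fun i => (M i).2 = true) := by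
      rw [heq]; exact Finset.mem_univ i
    exact hflagi (Finset.mem_filter.mp hmem).2
  have := Finset.card_lt_card (Finset.ssubset_univ_iff.mpr hne)
  simpa [zflagc] using this

theorem ZT3 (k₁ k₂ : ℕ) (hk₁ : 1 ≤ k₁) (hk₂ : 1 ≤ k₂) (N : ℕ) [NeZero N] :
    ∑ p ∈ zPairF k₁ k₂ N, zterm N p.1 = 0 := by
  rw [Finset.sum_finset_product (zPairF k₁ k₂ N)
    (Finset.univ.filter fun M : Fin N → Bool × Bool => zValidF M ∧ zCnt k₁ k₂ M)
    (fun M => Finset.univ.filter fun r => (M (r - 1)).2 = false)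
    (by intro p; simp [zPairF]; tauto)]
  have hstep : ∀ M ∈ (Finset.univ.filter fun M : Fin N → Bool × Bool =>
      zValidF M ∧ zCnt k₁ k₂ M),
      ∑ _r ∈ (Finset.univ.filter fun r : Fin N => (M (r - 1)).2 = false), zterm N M
        = (-1 : ℚ) ^ N • (((-1 : ℚ) ^ (zflagc M)) • zm (List.ofFn fun i => (M i).1)) := by
    intro M hM
    obtain ⟨-, hvf, hcnt⟩ := Finset.mem_filter.mp hM
    have hlt : zflagc M < N := zflagc_lt hk₂ M hvf hcnt
    have hcle : zflagc M ≤ N := le_of_lt hlt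
    have hfeq : (Finset.univ.filter fun r : Fin N => (M (r - 1)).2 = false)
        = Finset.univ.filter fun i : Fin N => (M (i + -1)).2 = false :=
      Finset.filter_congr (fun x _ => by rw [sub_eq_add_neg])
    have hshift := zcard_shift (fun s : Fin N => (M s).2 = false) (-1)
    have hnegeq : (Finset.univ.filter fun i : Fin N => ¬((M i).2 = true))
        = Finset.univ.filter fun i : Fin N => (M i).2 = false :=
      Finset.filter_congr (fun x _ => by simp)
    have hcompl := Finset.card_filter_add_card_filter_not
      (s := (Finset.univ : Finset (Fin N))) (p := fun i => (M i).2 = true)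
    rw [hnegeq] at hcompl
    have hcard : (Finset.univ.filter fun r : Fin N => (M (r - 1)).2 = false).card
        = N - zflagc M := by
      rw [hfeq, hshift]
      have hcu : (Finset.univ : Finset (Fin N)).card = N := by simp
      have : zflagc M = (Finset.univ.filter fun i : Fin N => (M i).2 = true).card := rfl
      omega
    rw [Finset.sum_const, hcard, ← Nat.cast_smul_eq_nsmul ℚ]
    unfold zterm
    rw [smul_smul, smul_smul]
    congr 1
    have hc0 : ((N - zflagc M : ℕ) : ℚ) ≠ 0 := Nat.cast_ne_zero.mpr (by omega)
    rw [mul_comm, div_mul_cancel₀ _ hc0, zsign_split hcle]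
  rw [Finset.sum_congr rfl hstep, ← Finset.smul_sum, zinv_sum k₁ k₂ hk₁ hk₂ N, smul_zero]

end ZMain

/-- For k₁, k₂ ≥ 1, the element
z_{k₁,k₂}(a,b) = ∑_{j=1}^{k₁+k₂} ((−1)^j/j) ∑_{π ∈ Π_{j,k₁,k₂}} z_π(a,b)
of ℚ⟨a,b⟩ is a sum of commutators. A partition π of {1,…,j} into three parts
is encoded as π : Fin j → Fin 3 (value 0 ↦ factor a, 1 ↦ factor b,
2 ↦ factor ab); Π_{j,k₁,k₂} consists of those π with
|π₁|+|π₃| = k₁ and |π₂|+|π₃| = k₂, and z_π is the ordered product. -/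
theorem z_k1k2_mem_commutatorSubspace (k₁ k₂ : ℕ) (hk₁ : 1 ≤ k₁) (hk₂ : 1 ≤ k₂)
    (a b : FreeAlgebra ℚ Bool) (ha : a = FreeAlgebra.ι ℚ true)
    (hb : b = FreeAlgebra.ι ℚ false) :
    (∑ j ∈ Finset.Icc 1 (k₁ + k₂), ((-1 : ℚ) ^ j / (j : ℚ)) •
        ∑ π ∈ (Finset.univ : Finset (Fin j → Fin 3)).filter
            (fun π => (Finset.univ.filter fun k => π k ≠ 1).card = k₁ ∧
                      (Finset.univ.filter fun k => π k ≠ 0).card = k₂),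
          (List.ofFn fun k : Fin j =>
            if π k = 0 then a else if π k = 1 then b else a * b).prod) ∈
      Submodule.span ℚ
        {y : FreeAlgebra ℚ Bool | ∃ p q, y = p * q - q * p} := by
  subst ha hb
  haveI : NeZero (k₁ + k₂) := ⟨by omega⟩
  show _ ∈ ZC
  rw [← Submodule.Quotient.mk_eq_zero ZC, ← Submodule.mkQ_apply, map_sum]
  simp only [map_smul, map_sum, Finset.smul_sum]
  rw [Finset.sum_sigma']
  have hT1 := ZT1 k₁ k₂ hk₁ hk₂ (k₁ + k₂) rfl
  rw [zSIG] at hT1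
  simp only [zF] at hT1
  rw [hT1]
  have hS0 : ∑ M ∈ zS0F k₁ k₂ (k₁ + k₂), zterm (k₁ + k₂) M = 0 := by
    have h2 := ZT2 k₁ k₂ (k₁ + k₂)
    have h3 := ZT3 k₁ k₂ hk₁ hk₂ (k₁ + k₂)
    have h4 : (k₁ + k₂) • ∑ M ∈ zS0F k₁ k₂ (k₁ + k₂), zterm (k₁ + k₂) M = 0 :=
      h2.symm.trans h3
    rw [← Nat.cast_smul_eq_nsmul ℚ] at h4
    rcases smul_eq_zero.mp h4 with h | h
    · exact absurd h (by positivity)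
    · exact h
  exact hS0
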